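/- Let a be a Wiener-class sequence and let E be a semi-infinite real matrix with the decay property, and set A := T(a) + E (entrywise sum). Then ‖A‖_∞ ≥ ‖a‖_W. -/

import Mathlib

open Filter Topology

/-- Every row of `A` is absolutely summable. -/
def RowsSummable (A : ℕ → ℕ → ℝ) : Prop := ∀ i, Summable fun j => |A i j|

/-- The infinity norm of a semi-infinite matrix: the supremum of the row sums. -/
noncomputable def normInf (A : ℕ → ℕ → ℝ) : ℝ := ⨆ i, ∑' j, |A i j|

/-- `A` is bounded: all row sums are finite and their supremum is finite. -/
def MatBounded (A : ℕ → ℕ → ℝ) : Prop :=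
  RowsSummable A ∧ BddAbove (Set.range fun i => ∑' j, |A i j|)

/-- `A` has the decay property: all row sums are finite and tend to zero. -/
def HasDecay (A : ℕ → ℕ → ℝ) : Prop :=
  RowsSummable A ∧ Tendsto (fun i => ∑' j, |A i j|) atTop (𝓝 0)

/-- The semi-infinite Toeplitz matrix associated with a two-sided sequence:
`T(a)_{ij} = a_{j−i}`. -/
noncomputable def Toep (a : ℤ → ℝ) : ℕ → ℕ → ℝ := fun i j => a ((j : ℤ) - (i : ℤ))

/-- Convolution of two-sided sequences. -/
noncomputable def zconv (a b : ℤ → ℝ) : ℤ → ℝ := fun n => ∑' k : ℤ, a k * b (n - k)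

/- STATEMENT 7: if a is Wiener-class and E has the decay property, then
‖T(a)+E‖_∞ ≥ ‖a‖_W. -/

theorem stmt7 (a : ℤ → ℝ) (ha : Summable fun n => |a n|)
    (E : ℕ → ℕ → ℝ) (hE : HasDecay E) :
    (∑' n : ℤ, |a n|) ≤ normInf (fun i j => Toep a i j + E i j) := by
  set T : ℝ := ∑' n : ℤ, |a n| with hT
  set w : ℕ → ℝ := fun i => ∑' j, |E i j| with hw
  have hinj : ∀ i : ℕ, Function.Injective (fun j : ℕ => (j : ℤ) - (i : ℤ)) := by
    intro i x y h
    simpa using sub_left_injective h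
  have hTsumm : ∀ i : ℕ, Summable (fun j : ℕ => |a ((j : ℤ) - (i : ℤ))|) := fun i =>
    ha.comp_injective (hinj i)
  have hAsumm : ∀ i : ℕ, Summable (fun j : ℕ => |Toep a i j + E i j|) := by
    intro i
    refine Summable.of_nonneg_of_le (fun j => abs_nonneg _) (fun j => abs_add_le _ _)
      ((hTsumm i).add (hE.1 i))
  have hwnn : ∀ i, 0 ≤ w i := fun i => tsum_nonneg fun j => abs_nonneg _
  -- row of Toeplitz ≤ T
  have hrowT_le : ∀ i : ℕ, (∑' j : ℕ, |a ((j : ℤ) - (i : ℤ))|) ≤ T :=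
    fun i => tsum_comp_le_tsum_of_inj ha (fun n => abs_nonneg _) (hinj i)
  -- row of A ≤ T + w i
  have hrowA_le : ∀ i : ℕ, (∑' j, |Toep a i j + E i j|) ≤ T + w i := by
    intro i
    calc (∑' j, |Toep a i j + E i j|) ≤ ∑' j : ℕ, (|a ((j : ℤ) - (i : ℤ))| + |E i j|) :=
          Summable.tsum_le_tsum (fun j => abs_add_le _ _) (hAsumm i) ((hTsumm i).add (hE.1 i))
      _ = (∑' j : ℕ, |a ((j : ℤ) - (i : ℤ))|) + w i := Summable.tsum_add (hTsumm i) (hE.1 i)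
      _ ≤ T + w i := by gcongr; exact hrowT_le i
  -- boundedness of the row sums of A
  obtain ⟨C, hC⟩ : BddAbove (Set.range w) := hE.2.bddAbove_range
  have hbdd : BddAbove (Set.range fun i => ∑' j, |Toep a i j + E i j|) := by
    refine ⟨T + C, ?_⟩
    rintro x ⟨i, rfl⟩
    exact (hrowA_le i).trans (by gcongr; exact hC ⟨i, rfl⟩)
  -- T(a) row ≤ A row + E row
  have hkey : ∀ i : ℕ, (∑' j : ℕ, |a ((j : ℤ) - (i : ℤ))|) ≤
      (∑' j, |Toep a i j + E i j|) + w i := by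
    intro i
    calc (∑' j : ℕ, |a ((j : ℤ) - (i : ℤ))|)
        ≤ ∑' j : ℕ, (|Toep a i j + E i j| + |E i j|) := by
          refine Summable.tsum_le_tsum (fun j => ?_) (hTsumm i) ((hAsumm i).add (hE.1 i))
          have : a ((j : ℤ) - (i : ℤ)) = (Toep a i j + E i j) - E i j := by
            simp [Toep]
          rw [this]
          exact (abs_sub _ _).trans (by rfl)
      _ = _ := Summable.tsum_add (hAsumm i) (hE.1 i)
  refine le_of_forall_pos_le_add ?_
  intro ε hε
  -- pick a finset s capturing T - ε/2
  have hhs := ha.hasSum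
  have hev : ∀ᶠ s : Finset ℤ in atTop, T - ε / 2 < ∑ n ∈ s, |a n| := by
    have h2 : Tendsto (fun s : Finset ℤ => ∑ n ∈ s, |a n|) atTop (𝓝 T) := hhs
    exact h2.eventually (eventually_gt_nhds (by linarith))
  obtain ⟨s, hs⟩ := hev.exists
  -- pick i large
  have hwev : ∀ᶠ i : ℕ in atTop, w i < ε / 2 :=
    hE.2.eventually (eventually_lt_nhds (by linarith))
  obtain ⟨N1, hN1⟩ := eventually_atTop.mp hwev
  set N2 : ℕ := s.sup (fun n => (-n).toNat) with hN2
  set i : ℕ := max N1 N2 with hi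
  have hwi : w i < ε / 2 := hN1 i (le_max_left _ _)
  -- ∑ over s ≤ Toeplitz row i
  have hsum_le : (∑ n ∈ s, |a n|) ≤ ∑' j : ℕ, |a ((j : ℤ) - (i : ℤ))| := by
    have himg : ∀ n ∈ s, ((n + (i : ℤ)).toNat : ℤ) = n + (i : ℤ) := by
      intro n hn
      refine Int.toNat_of_nonneg ?_
      have h1 : (-n).toNat ≤ N2 := Finset.le_sup (f := fun n : ℤ => (-n).toNat) hn
      have h2 : (-n).toNat ≤ i := h1.trans (le_max_right _ _)
      omega
    have := Summable.sum_le_tsum (s.image (fun n => (n + (i : ℤ)).toNat))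
      (fun j _ => abs_nonneg (a ((j : ℤ) - (i : ℤ)))) (hTsumm i)
    refine le_trans (le_of_eq ?_) this
    rw [Finset.sum_image]
    · refine Finset.sum_congr rfl fun n hn => ?_
      rw [himg n hn]
      ring_nf
    · intro x hx y hy hxy
      have hx' := himg x hx
      have hy' := himg y hy
      simp only at hxy
      omega
  -- conclude
  have h1 : T - ε ≤ ∑' j, |Toep a i j + E i j| := by
    have := hkey i
    linarith [hsum_le, hs.le, hwi]
  have h2 : (∑' j, |Toep a i j + E i j|) ≤ normInf (fun i j => Toep a i j + E i j) :=
    le_ciSup hbdd i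
  linarith
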